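/- Let Σ be a finite alphabet and let u, v ∈ Σ* be words of equal length. Then u and v are cyclically equalizable if and only if they have the same Parikh vector (equivalently, v is a permutation of u). -/

import Mathlib

/-- Interleave insertion strings `ss = [s₀, …, sₙ]` with the letters of `w = [w₀, …, w_{n-1}]`,
producing `s₀ w₀ s₁ w₁ ⋯ s_{n-1} w_{n-1} sₙ`. -/
def interleave {α : Type*} : List (List α) → List α → List α
  | [], _ => []
  | s :: _, [] => s
  | s :: ss, a :: w => s ++ a :: interleave ss w

/-- `u` and `v` are cyclically equalizable: some simultaneous insertion transforms
them into rotations of each other. -/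
def CyclicallyEqualizable {α : Type*} (u v : List α) : Prop :=
  ∃ ss : List (List α), ss.length = u.length + 1 ∧
    (interleave ss u).IsRotated (interleave ss v)




namespace Stmt8
variable {α : Type*}

lemma count_interleave [DecidableEq α] :
    ∀ (ss : List (List α)) (w : List α), ss.length = w.length + 1 → ∀ a : α,
      (interleave ss w).count a = (ss.map (fun s => s.count a)).sum + w.count a
  | [], w, h, a => by simp at h
  | s :: ss, [], h, a => by
      have hss : ss = [] := List.length_eq_zero_iff.mp (by simpa using h)
      subst hss; simp [interleave]
  | s :: ss, b :: w, h, a => by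
      have ih := count_interleave ss w (by simpa using h) a
      simp only [interleave, List.count_append, List.count_cons, List.map_cons, List.sum_cons, ih]
      omega

end Stmt8



namespace Stmt8
variable {α : Type*}

lemma exists_interleave :
    ∀ (u v : List α) (q : ℕ → ℕ) (W1 W2 : List α),
      u.length = v.length → W1.length = W2.length →
      (∀ i j, i < j → j < u.length → q i < q j) →
      (∀ i, i < u.length → W1[q i]? = u[i]?) →
      (∀ i, i < u.length → W2[q i]? = v[i]?) →
      (∀ p, (∀ i, i < u.length → p ≠ q i) → W1[p]? = W2[p]?) →
      ∃ ss : List (List α), ss.length = u.length + 1 ∧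
        interleave ss u = W1 ∧ interleave ss v = W2
  | [], v, q, W1, W2, hlen, hW, _, _, _, hun => by
      have hv : v = [] := by simpa using hlen.symm
      subst hv
      have : W1 = W2 := List.ext_getElem? fun p => hun p (by simp)
      exact ⟨[W1], by simp, by simp [interleave], by simp [interleave, this]⟩
  | a :: u, v, q, W1, W2, hlen, hW, hmono, h1, h2, hun => by
      obtain ⟨b, v, rfl⟩ : ∃ b v', v = b :: v' := by
        cases v with
        | nil => simp at hlen
        | cons b v' => exact ⟨b, v', rfl⟩
      have hlen' : u.length = v.length := by simpa using hlen
      set m := q 0 with hm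
      have hW1m : W1[m]? = some a := by simpa using h1 0 (by simp)
      have hW2m : W2[m]? = some b := by simpa using h2 0 (by simp)
      have hmlt : m < W1.length := by
        by_contra h
        rw [List.getElem?_eq_none_iff.mpr (by omega)] at hW1m; simp at hW1m
      have hmlt2 : m < W2.length := hW ▸ hmlt
      have hqgt : ∀ i, i < u.length → m < q (i + 1) := fun i hi =>
        hmono 0 (i+1) (by omega) (by simpa using hi)
      -- the common prefix
      have hpre : W1.take m = W2.take m := by
        apply List.ext_getElem?
        intro p
        rcases lt_or_ge p m with hp | hp
        · rw [List.getElem?_take_of_lt hp, List.getElem?_take_of_lt hp]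
          refine hun p fun i hi => ?_
          cases i with
          | zero => omega
          | succ i' => have := hqgt i' (by simpa using hi); omega
        · rw [List.getElem?_eq_none_iff.mpr (by simp; omega), List.getElem?_eq_none_iff.mpr (by simp; omega)]
      obtain ⟨ss, hsslen, hss1, hss2⟩ :=
        exists_interleave u v (fun i => q (i + 1) - (m + 1))
          (W1.drop (m + 1)) (W2.drop (m + 1)) hlen' (by simp [hW])
          (fun i j hij hj => by
            have h1 := hmono (i+1) (j+1) (by omega) (by simpa using hj)
            have h2 := hqgt i (by omega)
            show q (i + 1) - (m + 1) < q (j + 1) - (m + 1)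
            omega)
          (fun i hi => by
            rw [List.getElem?_drop]
            have := hqgt i hi
            rw [show m + 1 + (q (i+1) - (m+1)) = q (i+1) by omega]
            simpa using h1 (i+1) (by simpa using hi))
          (fun i hi => by
            rw [List.getElem?_drop]
            have := hqgt i hi
            rw [show m + 1 + (q (i+1) - (m+1)) = q (i+1) by omega]
            simpa using h2 (i+1) (by simpa using hi))
          (fun p hp => by
            rw [List.getElem?_drop, List.getElem?_drop]
            refine hun (m + 1 + p) fun i hi => ?_
            cases i with
            | zero => omega
            | succ i' =>
                have hne : p ≠ q (i' + 1) - (m + 1) := hp i' (by simpa using hi)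
                have := hqgt i' (by simpa using hi)
                omega)
      refine ⟨W1.take m :: ss, by simpa using hsslen, ?_, ?_⟩
      · show W1.take m ++ a :: interleave ss u = W1
        rw [hss1]
        have hd : W1.drop m = a :: W1.drop (m + 1) := by
          rw [List.drop_eq_getElem_cons hmlt]
          congr 1
          have := List.getElem?_eq_getElem (l := W1) hmlt
          rw [hW1m] at this
          exact (Option.some_inj.mp this.symm)
        conv_rhs => rw [← List.take_append_drop m W1]
        rw [hd]
      · show W1.take m ++ b :: interleave ss v = W2
        rw [hss2, hpre]
        have hd : W2.drop m = b :: W2.drop (m + 1) := by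
          rw [List.drop_eq_getElem_cons hmlt2]
          congr 1
          have := List.getElem?_eq_getElem (l := W2) hmlt2
          rw [hW2m] at this
          exact (Option.some_inj.mp this.symm)
        conv_rhs => rw [← List.take_append_drop m W2]
        rw [hd]

end Stmt8


namespace Stmt8
variable {α : Type*}

lemma perm_exists_equiv {u v : List α} (h : u.Perm v) :
    ∃ σ : Fin v.length ≃ Fin u.length, ∀ i, v.get i = u.get (σ i) := by
  induction h with
  | nil => exact ⟨Equiv.refl _, fun i => i.elim0⟩
  | cons a _ ih =>
      obtain ⟨σ, hσ⟩ := ih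
      refine ⟨(finSuccEquiv _).trans ((σ.optionCongr).trans (finSuccEquiv _).symm), ?_⟩
      intro i
      refine Fin.cases ?_ (fun j => ?_) i
      · simp
      · simpa using hσ j
  | swap x y l =>
      have h0 : (0:ℕ) < (x::y::l).length := by simp
      have h1 : (1:ℕ) < (x::y::l).length := by simp
      refine ⟨Equiv.swap ⟨0, h0⟩ ⟨1, h1⟩, ?_⟩
      rintro ⟨iv, hi⟩
      match iv, hi with
      | 0, hi => simp [Equiv.swap_apply_def, Fin.ext_iff]
      | 1, hi => simp [Equiv.swap_apply_def, Fin.ext_iff]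
      | (k+2), hi => simp [Equiv.swap_apply_def, Fin.ext_iff]
  | trans _ _ ih1 ih2 =>
      obtain ⟨σ1, hσ1⟩ := ih1
      obtain ⟨σ2, hσ2⟩ := ih2
      exact ⟨σ2.trans σ1, fun i => (hσ2 i).trans (hσ1 (σ2 i))⟩

end Stmt8


namespace Stmt8
variable {n : ℕ}

/-- forward orbit of `i` under σ -/
def orb (σ : Equiv.Perm (Fin n)) (i : Fin n) : Finset (Fin n) :=
  (Finset.range n).image (fun t => (⇑σ)^[t] i)

lemma mem_orb_self (σ : Equiv.Perm (Fin n)) (i : Fin n) : i ∈ orb σ i := by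
  refine Finset.mem_image.mpr ⟨0, Finset.mem_range.mpr i.pos, rfl⟩

lemma exists_period (σ : Equiv.Perm (Fin n)) (i : Fin n) :
    ∃ L, 0 < L ∧ L ≤ n ∧ (⇑σ)^[L] i = i := by
  obtain ⟨a, b, hab, he⟩ := Fintype.exists_ne_map_eq_of_card_lt
    (fun t : Fin (n+1) => (⇑σ)^[(t : ℕ)] i) (by simp)
  wlog h : (a : ℕ) < (b : ℕ) generalizing a b
  · have hne : (a:ℕ) ≠ (b:ℕ) := Fin.val_ne_of_ne hab
    exact this b a hab.symm he.symm (by omega)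
  · refine ⟨(b : ℕ) - a, by omega, by omega, ?_⟩
    have hinj := (Equiv.injective σ).iterate (a : ℕ)
    apply hinj
    rw [← Function.iterate_add_apply]
    rw [show (a : ℕ) + ((b : ℕ) - a) = (b : ℕ) by omega]
    exact he.symm

lemma iterate_mul_period (σ : Equiv.Perm (Fin n)) (i : Fin n) {L : ℕ}
    (hL : (⇑σ)^[L] i = i) : ∀ m, (⇑σ)^[m * L] i = i := by
  intro m
  induction m with
  | zero => simp
  | succ m ih =>
      rw [Nat.succ_mul, Function.iterate_add_apply, hL, ih]

lemma iterate_mod_period (σ : Equiv.Perm (Fin n)) (i : Fin n) {L : ℕ} (hL0 : 0 < L)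
    (hL : (⇑σ)^[L] i = i) (t : ℕ) : (⇑σ)^[t] i = (⇑σ)^[t % L] i := by
  conv_lhs => rw [show t = t % L + L * (t / L) from (Nat.mod_add_div t L).symm]
  rw [Function.iterate_add_apply, mul_comm L, iterate_mul_period σ i hL]

lemma iter_mem_orb (σ : Equiv.Perm (Fin n)) (i : Fin n) (t : ℕ) :
    (⇑σ)^[t] i ∈ orb σ i := by
  obtain ⟨L, hL0, hLn, hL⟩ := exists_period σ i
  rw [iterate_mod_period σ i hL0 hL t]
  have hmlt := Nat.mod_lt t hL0
  exact Finset.mem_image.mpr ⟨t % L, Finset.mem_range.mpr (by omega), rfl⟩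

lemma orb_subset_of_mem (σ : Equiv.Perm (Fin n)) {i j : Fin n} (h : j ∈ orb σ i) :
    orb σ j ⊆ orb σ i := by
  obtain ⟨s, _, rfl⟩ := Finset.mem_image.mp h
  intro x hx
  obtain ⟨t, _, rfl⟩ := Finset.mem_image.mp hx
  rw [← Function.iterate_add_apply]
  exact iter_mem_orb σ i (t + s)

lemma mem_orb_symm (σ : Equiv.Perm (Fin n)) {i j : Fin n} (h : j ∈ orb σ i) :
    i ∈ orb σ j := by
  obtain ⟨s, _, rfl⟩ := Finset.mem_image.mp h
  obtain ⟨L, hL0, hLn, hL⟩ := exists_period σ i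
  have hs : (⇑σ)^[s % L] i = (⇑σ)^[s] i := (iterate_mod_period σ i hL0 hL s).symm
  have hmlt := Nat.mod_lt s hL0
  have heq : (⇑σ)^[L - s % L] ((⇑σ)^[s] i) = i := by
    rw [← hs, ← Function.iterate_add_apply]
    rw [show L - s % L + s % L = L by omega]
    exact hL
  have h2 := iter_mem_orb σ ((⇑σ)^[s] i) (L - s % L)
  rwa [heq] at h2

lemma orb_eq_of_mem (σ : Equiv.Perm (Fin n)) {i j : Fin n} (h : j ∈ orb σ i) :
    orb σ j = orb σ i :=
  le_antisymm (orb_subset_of_mem σ h) (orb_subset_of_mem σ (mem_orb_symm σ h))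

/-- minimum of the orbit -/
def cm (σ : Equiv.Perm (Fin n)) (i : Fin n) : Fin n :=
  (orb σ i).min' ⟨i, mem_orb_self σ i⟩

lemma cm_mem (σ : Equiv.Perm (Fin n)) (i : Fin n) : cm σ i ∈ orb σ i :=
  Finset.min'_mem _ _

lemma cm_eq_of_mem (σ : Equiv.Perm (Fin n)) {i j : Fin n} (h : j ∈ orb σ i) :
    cm σ j = cm σ i := by
  unfold cm
  congr 1
  exact orb_eq_of_mem σ h

lemma cm_sigma (σ : Equiv.Perm (Fin n)) (i : Fin n) : cm σ (σ i) = cm σ i :=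
  cm_eq_of_mem σ (by simpa using iter_mem_orb σ i 1)

lemma mem_orb_iff_cm (σ : Equiv.Perm (Fin n)) {i j : Fin n} :
    j ∈ orb σ i ↔ cm σ j = cm σ i := by
  constructor
  · exact cm_eq_of_mem σ
  · intro h
    have h1 : j ∈ orb σ (cm σ j) := mem_orb_symm σ (cm_mem σ j)
    rw [h] at h1
    exact (orb_eq_of_mem σ (cm_mem σ i)) ▸ h1

lemma rank_exists (σ : Equiv.Perm (Fin n)) (i : Fin n) :
    ∃ t, (⇑σ)^[t] (cm σ i) = i := by
  have : i ∈ orb σ (cm σ i) := mem_orb_symm σ (cm_mem σ i)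
  obtain ⟨t, _, ht⟩ := Finset.mem_image.mp this
  exact ⟨t, ht⟩

/-- rank of `i` in its orbit, counted from the minimum -/
def rk (σ : Equiv.Perm (Fin n)) (i : Fin n) : ℕ := Nat.find (rank_exists σ i)

lemma rk_spec (σ : Equiv.Perm (Fin n)) (i : Fin n) : (⇑σ)^[rk σ i] (cm σ i) = i :=
  Nat.find_spec (rank_exists σ i)

lemma rk_lt (σ : Equiv.Perm (Fin n)) (i : Fin n) : rk σ i < n := by
  have : i ∈ orb σ (cm σ i) := mem_orb_symm σ (cm_mem σ i)
  obtain ⟨t, htn, ht⟩ := Finset.mem_image.mp this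
  exact lt_of_le_of_lt (Nat.find_min' _ ht) (Finset.mem_range.mp htn)

lemma rk_inj (σ : Equiv.Perm (Fin n)) {i j : Fin n} (hcm : cm σ j = cm σ i)
    (hrk : rk σ j = rk σ i) : j = i := by
  have h1 := rk_spec σ i
  have h2 := rk_spec σ j
  rw [hcm, hrk] at h2
  rw [← h1, ← h2]

lemma eq_cm_of_rk_zero (σ : Equiv.Perm (Fin n)) {i : Fin n} (h : rk σ i = 0) :
    i = cm σ i := by
  have := rk_spec σ i
  rw [h] at this
  simpa using this.symm

lemma rk_zero_of_eq_cm (σ : Equiv.Perm (Fin n)) {i : Fin n} (h : i = cm σ i) :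
    rk σ i = 0 :=
  Nat.find_eq_zero _ |>.mpr (by simpa using h.symm)

lemma rk_min (σ : Equiv.Perm (Fin n)) (i : Fin n) {t : ℕ} (ht : t < rk σ i) :
    (⇑σ)^[t] (cm σ i) ≠ i :=
  Nat.find_min (rank_exists σ i) ht

lemma rk_sigma (σ : Equiv.Perm (Fin n)) {i : Fin n} (h : σ i ≠ cm σ i) :
    rk σ (σ i) = rk σ i + 1 := by
  have hcm : cm σ (σ i) = cm σ i := cm_sigma σ i
  apply le_antisymm
  · apply Nat.find_min'
    rw [hcm, Function.iterate_succ_apply', rk_spec σ i]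
  · by_contra hlt
    push_neg at hlt
    have hspec := rk_spec σ (σ i)
    rw [hcm] at hspec
    cases h' : rk σ (σ i) with
    | zero =>
        have h2 := eq_cm_of_rk_zero σ h'
        rw [hcm] at h2
        exact h h2
    | succ t' =>
        rw [h', Function.iterate_succ_apply'] at hspec
        have h3 : (⇑σ)^[t'] (cm σ i) = i := σ.injective hspec
        exact rk_min σ i (by omega) h3

lemma exists_maxrank (σ : Equiv.Perm (Fin n)) (i : Fin n) :
    ∃ jm : Fin n, cm σ jm = cm σ i ∧ (∀ j, cm σ j = cm σ i → rk σ j ≤ rk σ jm) ∧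
      σ jm = cm σ i := by
  obtain ⟨jm, hjm, hmax⟩ := Finset.exists_max_image (orb σ i) (rk σ) ⟨i, mem_orb_self σ i⟩
  have hcm : cm σ jm = cm σ i := (mem_orb_iff_cm σ).mp hjm
  have hmax' : ∀ j, cm σ j = cm σ i → rk σ j ≤ rk σ jm := fun j hj =>
    hmax j ((mem_orb_iff_cm σ).mpr hj)
  refine ⟨jm, hcm, hmax', ?_⟩
  by_contra hne
  have : rk σ (σ jm) = rk σ jm + 1 := rk_sigma σ (by rwa [hcm])
  have hle := hmax' (σ jm) (by rw [cm_sigma σ jm, hcm])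
  omega

end Stmt8
namespace Stmt8
variable {α : Type*} {n : ℕ}

def Rc (n : ℕ) : ℕ := 2*n*n + n + 1
def N2c (n : ℕ) : ℕ := Rc n * Rc n
def kpc (n : ℕ) : ℕ := N2c n - Rc n + 1
def coF (σ : Equiv.Perm (Fin n)) (i : Fin n) : ℕ := 2*n*(rk σ i) + n
def bbF (σ : Equiv.Perm (Fin n)) (i : Fin n) : ℕ := coF σ i - (i:ℕ)
def xxF (σ : Equiv.Perm (Fin n)) (i : Fin n) : ℕ := (i:ℕ) * Rc n + bbF σ i
def TF (σ : Equiv.Perm (Fin n)) (i : Fin n) : ℕ := coF σ i * Rc n + bbF σ i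
def qF (σ : Equiv.Perm (Fin n)) (i : Fin n) : ℕ := n * xxF σ i + (cm σ i : ℕ)
def decF (n m : ℕ) : ℕ := m / Rc n - m % Rc n
def TcF (σ : Equiv.Perm (Fin n)) (c : ℕ) : Finset ℕ :=
  (Finset.univ.filter (fun j : Fin n => (cm σ j : ℕ) = c)).image (TF σ)
def vvF (vf : Fin n → α) (d : α) (m : ℕ) : α :=
  if h : decF n m < n then vf ⟨decF n m, h⟩ else d
def ggF (σ : Equiv.Perm (Fin n)) (vf : Fin n → α) (d : α) (c t : ℕ) : α :=
  if h : ((TcF σ c).filter (· < t)).Nonempty then vvF vf d (((TcF σ c).filter (· < t)).max' h)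
  else if h2 : (TcF σ c).Nonempty then vvF vf d ((TcF σ c).max' h2)
  else d
def ffF (σ : Equiv.Perm (Fin n)) (vf : Fin n → α) (d : α) (p : ℕ) : α :=
  ggF σ vf d (p % n) ((Rc n + 1) * (p / n) % N2c n)

section Arith
variable (σ : Equiv.Perm (Fin n))

lemma hR_pos (hn : 0 < n) : 0 < Rc n := by unfold Rc; omega

lemma n_le_R : n ≤ Rc n := by unfold Rc; omega

lemma i_add_bb (i : Fin n) : (i:ℕ) + bbF σ i = coF σ i := by
  have h1 : (i:ℕ) < n := i.isLt
  have h2 : n ≤ coF σ i := by unfold coF; omega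
  unfold bbF; omega

lemma co_succ_lt_R (i : Fin n) : coF σ i + 1 < Rc n := by
  have hrk : rk σ i + 1 ≤ n := rk_lt σ i
  have h1 : 2*n*(rk σ i + 1) ≤ 2*n*n := Nat.mul_le_mul_left (2*n) hrk
  rw [Nat.mul_succ] at h1
  have hn : 0 < n := i.pos
  unfold coF Rc; omega

lemma bb_lt_R (i : Fin n) : bbF σ i < Rc n := by
  have h1 := co_succ_lt_R σ i
  have h2 : bbF σ i ≤ coF σ i := by unfold bbF; omega
  omega

lemma T_lt (i : Fin n) : TF σ i + 1 < N2c n := by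
  have h1 := co_succ_lt_R σ i
  have h2 := bb_lt_R σ i
  have h3 : (coF σ i + 1) * Rc n ≤ (Rc n - 1) * Rc n :=
    Nat.mul_le_mul_right _ (by omega)
  have h4 : (coF σ i + 1) * Rc n = coF σ i * Rc n + Rc n := by rw [Nat.succ_mul]
  have h5 : (Rc n - 1) * Rc n + Rc n = N2c n := by
    have h6 : Rc n - 1 + 1 = Rc n := by have := hR_pos (n := n) i.pos; omega
    calc (Rc n - 1) * Rc n + Rc n = (Rc n - 1 + 1) * Rc n := by rw [Nat.succ_mul]
    _ = N2c n := by rw [h6]; rfl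
  have h0 := hR_pos (n := n) i.pos
  unfold TF; unfold TF at h4; omega

lemma T_mod_eq (i : Fin n) : (Rc n + 1) * xxF σ i % N2c n = TF σ i := by
  have key : (Rc n + 1) * xxF σ i = TF σ i + (i:ℕ) * N2c n := by
    have h1 : (Rc n + 1) * ((i:ℕ) * Rc n + bbF σ i)
        = (((i:ℕ) + bbF σ i) * Rc n + bbF σ i) + (i:ℕ) * (Rc n * Rc n) := by ring
    unfold xxF TF N2c
    rw [h1, i_add_bb]
  rw [key, Nat.add_mul_mod_self_right]
  exact Nat.mod_eq_of_lt (by have := T_lt σ i; omega)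

lemma T_mono {i j : Fin n} (h : rk σ j < rk σ i) : TF σ j < TF σ i := by
  have hco : coF σ j + 1 ≤ coF σ i := by
    have h1 : 2*n*(rk σ j + 1) ≤ 2*n*(rk σ i) := Nat.mul_le_mul_left (2*n) h
    rw [Nat.mul_succ] at h1
    have hn : 0 < n := i.pos
    unfold coF; omega
  have h2 : (coF σ j + 1) * Rc n ≤ coF σ i * Rc n := Nat.mul_le_mul_right _ hco
  have h3 : (coF σ j + 1) * Rc n = coF σ j * Rc n + Rc n := by rw [Nat.succ_mul]
  have h4 := bb_lt_R σ j
  unfold TF; omega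

lemma dec_T (i : Fin n) : decF n (TF σ i) = (i:ℕ) := by
  have h1 := bb_lt_R σ i
  have hR : 0 < Rc n := hR_pos i.pos
  have hdiv : TF σ i / Rc n = coF σ i := by
    unfold TF
    rw [show coF σ i * Rc n + bbF σ i = Rc n * coF σ i + bbF σ i by ring,
      Nat.mul_add_div hR, Nat.div_eq_of_lt h1, add_zero]
  have hmod : TF σ i % Rc n = bbF σ i := by
    unfold TF
    rw [show coF σ i * Rc n + bbF σ i = bbF σ i + coF σ i * Rc n by ring,
      Nat.add_mul_mod_self_right, Nat.mod_eq_of_lt h1]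
  have h2 := i_add_bb σ i
  unfold decF
  omega

lemma T_inj {i j : Fin n} (h : TF σ j = TF σ i) : j = i := by
  have h1 := dec_T σ i
  have h2 := dec_T σ j
  rw [h] at h2
  exact Fin.ext (by omega)

lemma T_le_of_rk_le {i j : Fin n} (hcm : cm σ j = cm σ i) (h : rk σ j ≤ rk σ i) :
    TF σ j ≤ TF σ i := by
  rcases Nat.lt_or_ge (rk σ j) (rk σ i) with h' | h'
  · exact le_of_lt (T_mono σ h')
  · have : rk σ j = rk σ i := by omega
    rw [rk_inj σ hcm this]

lemma rk_lt_of_T_lt {i j : Fin n} (hcm : cm σ j = cm σ i) (h : TF σ j < TF σ i) :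
    rk σ j < rk σ i := by
  by_contra h'
  push_neg at h'
  have := T_le_of_rk_le σ hcm.symm h'
  omega

lemma vv_T (vf : Fin n → α) (d : α) (i : Fin n) : vvF vf d (TF σ i) = vf i := by
  unfold vvF
  rw [dec_T]
  simp [i.isLt]

end Arith
end Stmt8
namespace Stmt8
variable {α : Type*} {n : ℕ}

section Arith2
variable (σ : Equiv.Perm (Fin n))

lemma kp_identity (hn : 0 < n) : (Rc n + 1) * kpc n = Rc n * N2c n + 1 := by
  have hR : 0 < Rc n := hR_pos hn
  have hRN : Rc n ≤ N2c n := Nat.le_mul_of_pos_left _ hR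
  show (Rc n + 1) * (Rc n * Rc n - Rc n + 1) = Rc n * (Rc n * Rc n) + 1
  have hRN' : Rc n ≤ Rc n * Rc n := hRN
  zify [hRN']
  ring

lemma coprime_R1 : Nat.Coprime (Rc n + 1) (N2c n) := by
  have h : Nat.Coprime (Rc n + 1) (Rc n) := by
    simpa using Nat.coprime_add_self_left (m := 1) (n := Rc n)
  exact Nat.Coprime.mul_right h h

lemma time_inj (hn : 0 < n) {a b : ℕ} (ha : a < N2c n) (hb : b < N2c n)
    (h : (Rc n + 1) * a % N2c n = (Rc n + 1) * b % N2c n) : a = b := by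
  have hco : Nat.gcd (N2c n) (Rc n + 1) = 1 := (coprime_R1 (n := n)).symm
  have h2 : a ≡ b [MOD N2c n] := Nat.ModEq.cancel_left_of_coprime hco h
  have := h2.eq_of_lt_of_lt ha hb
  exact this

lemma mod_smul (hn : 0 < n) {m : ℕ} (hm : 0 < m) (y c : ℕ) (hc : c < n) :
    (n*y + c) % (n*m) = n*(y % m) + c := by
  have hdm : y % m < m := Nat.mod_lt _ hm
  have key : n*y + c = (n*(y % m) + c) + (y / m) * (n * m) := by
    conv_lhs => rw [show y = m * (y / m) + y % m from (Nat.div_add_mod y m).symm]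
    ring
  rw [key, Nat.add_mul_mod_self_right]
  apply Nat.mod_eq_of_lt
  have h1 : n*(y % m) + n ≤ n * m := by
    rw [show n*(y % m) + n = n * (y % m + 1) by ring]
    exact Nat.mul_le_mul_left _ (by omega)
  omega

lemma div_smul (hn : 0 < n) (y c : ℕ) (hc : c < n) : (n*y + c) / n = y := by
  rw [Nat.mul_add_div hn, Nat.div_eq_of_lt hc, add_zero]

lemma mod_smul' (hn : 0 < n) (y c : ℕ) (hc : c < n) : (n*y + c) % n = c := by
  rw [Nat.mul_add_mod, Nat.mod_eq_of_lt hc]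

lemma xx_lt (i : Fin n) : xxF σ i < N2c n := by
  have h1 := bb_lt_R σ i
  have h2 : (i:ℕ) + 1 ≤ n := i.isLt
  have h3 : ((i:ℕ) + 1) * Rc n ≤ n * Rc n := Nat.mul_le_mul_right _ h2
  have h4 : n * Rc n ≤ Rc n * Rc n := Nat.mul_le_mul_right _ (n_le_R)
  have h5 : ((i:ℕ) + 1) * Rc n = (i:ℕ) * Rc n + Rc n := by rw [Nat.succ_mul]
  unfold xxF N2c
  omega

lemma q_lt_N (i : Fin n) : qF σ i < n * N2c n := by
  have h1 : xxF σ i + 1 ≤ N2c n := xx_lt σ i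
  have h2 : n * (xxF σ i + 1) ≤ n * N2c n := Nat.mul_le_mul_left _ h1
  have h3 : n * (xxF σ i + 1) = n * xxF σ i + n := by ring
  have h4 : (cm σ i : ℕ) < n := (cm σ i).isLt
  unfold qF
  omega

lemma q_mono {i j : Fin n} (h : (i:ℕ) < (j:ℕ)) : qF σ i < qF σ j := by
  have hxx : xxF σ i < xxF σ j := by
    have h1 := bb_lt_R σ i
    have h2 : ((i:ℕ) + 1) * Rc n ≤ (j:ℕ) * Rc n := Nat.mul_le_mul_right _ (by omega)
    have h3 : ((i:ℕ) + 1) * Rc n = (i:ℕ) * Rc n + Rc n := by rw [Nat.succ_mul]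
    unfold xxF
    omega
  have h4 : n * (xxF σ i + 1) ≤ n * xxF σ j := Nat.mul_le_mul_left _ hxx
  have h5 : n * (xxF σ i + 1) = n * xxF σ i + n := by ring
  have h6 : (cm σ i : ℕ) < n := (cm σ i).isLt
  unfold qF
  omega

lemma N2_pos (hn : 0 < n) : 0 < N2c n := by
  have := hR_pos hn; unfold N2c; positivity

lemma N2_big (hn : 0 < n) : 1 < N2c n := by
  have h4 : 4 ≤ Rc n := by
    have h1 : 2*1*1 ≤ 2*n*n := Nat.mul_le_mul (by omega) (by omega)
    unfold Rc; omega
  have h5 : 4 * 4 ≤ Rc n * Rc n := Nat.mul_le_mul h4 h4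
  unfold N2c; omega

lemma step_pos (hn : 0 < n) (p : ℕ) :
    ((p + n * kpc n) % (n * N2c n)) % n = p % n ∧
    ((p + n * kpc n) % (n * N2c n)) / n = (p / n + kpc n) % N2c n := by
  have hN2 := N2_pos (n := n) hn
  have hc : p % n < n := Nat.mod_lt _ hn
  have h1 : p + n * kpc n = n * (p / n + kpc n) + p % n := by
    conv_lhs => rw [show p = n * (p / n) + p % n from (Nat.div_add_mod p n).symm]
    ring
  rw [h1, mod_smul hn hN2 _ _ hc, mod_smul' hn _ _ hc, div_smul hn _ _ hc]
  exact ⟨rfl, rfl⟩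

lemma step_time (hn : 0 < n) (y : ℕ) :
    (Rc n + 1) * ((y + kpc n) % N2c n) % N2c n
      = ((Rc n + 1) * y % N2c n + 1) % N2c n := by
  have hN2 := N2_big (n := n) hn
  have h2 : (Rc n + 1) * ((y + kpc n) % N2c n) % N2c n
      = (Rc n + 1) * (y + kpc n) % N2c n := by
    conv_lhs => rw [Nat.mul_mod]
    conv_rhs => rw [Nat.mul_mod]
    simp
  rw [h2]
  have h3 : (Rc n + 1) * (y + kpc n) = ((Rc n + 1) * y + 1) + Rc n * N2c n := by
    rw [Nat.mul_add, kp_identity hn]; ring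
  rw [h3, Nat.add_mul_mod_self_right, Nat.add_mod, Nat.mod_eq_of_lt hN2]

end Arith2
end Stmt8
namespace Stmt8
variable {α : Type*} {n : ℕ}

section GG
variable (σ : Equiv.Perm (Fin n)) (vf : Fin n → α) (d : α)

lemma mem_Tc {c m : ℕ} : m ∈ TcF σ c ↔ ∃ j : Fin n, (cm σ j : ℕ) = c ∧ TF σ j = m := by
  unfold TcF
  simp

lemma gg_eval_max (c t : ℕ) (jstar : Fin n) (hc : (cm σ jstar : ℕ) = c)
    (hlt : TF σ jstar < t)
    (hmax : ∀ j : Fin n, (cm σ j : ℕ) = c → TF σ j < t → TF σ j ≤ TF σ jstar) :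
    ggF σ vf d c t = vf jstar := by
  have hmem : TF σ jstar ∈ (TcF σ c).filter (· < t) := by
    rw [Finset.mem_filter]
    exact ⟨mem_Tc σ |>.mpr ⟨jstar, hc, rfl⟩, hlt⟩
  have hne : ((TcF σ c).filter (· < t)).Nonempty := ⟨_, hmem⟩
  unfold ggF
  rw [dif_pos hne]
  have hmx : ((TcF σ c).filter (· < t)).max' hne = TF σ jstar := by
    apply le_antisymm
    · apply Finset.max'_le
      intro y hy
      rw [Finset.mem_filter] at hy
      obtain ⟨j, hj1, hj2⟩ := (mem_Tc σ).mp hy.1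
      rw [← hj2]
      exact hmax j hj1 (hj2 ▸ hy.2)
    · exact Finset.le_max' _ _ hmem
  rw [hmx, vv_T]

lemma gg_eval_fallback (c t : ℕ) (jm : Fin n) (hc : (cm σ jm : ℕ) = c)
    (hempty : ∀ j : Fin n, (cm σ j : ℕ) = c → ¬ TF σ j < t)
    (hmax : ∀ j : Fin n, (cm σ j : ℕ) = c → TF σ j ≤ TF σ jm) :
    ggF σ vf d c t = vf jm := by
  have hfe : ((TcF σ c).filter (· < t)) = ∅ := by
    ext m
    simp only [Finset.mem_filter, Finset.notMem_empty, iff_false, not_and]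
    intro hm hlt
    obtain ⟨j, hj1, hj2⟩ := (mem_Tc σ).mp hm
    exact hempty j hj1 (hj2 ▸ hlt)
  have hne2 : (TcF σ c).Nonempty := ⟨TF σ jm, (mem_Tc σ).mpr ⟨jm, hc, rfl⟩⟩
  unfold ggF
  rw [dif_neg (by rw [hfe]; exact Finset.not_nonempty_empty), dif_pos hne2]
  have hmx : (TcF σ c).max' hne2 = TF σ jm := by
    apply le_antisymm
    · apply Finset.max'_le
      intro y hy
      obtain ⟨j, hj1, hj2⟩ := (mem_Tc σ).mp hy
      rw [← hj2]
      exact hmax j hj1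
    · exact Finset.le_max' _ _ ((mem_Tc σ).mpr ⟨jm, hc, rfl⟩)
  rw [hmx, vv_T]

lemma ff_q (i : Fin n) : ffF σ vf d (qF σ i) = ggF σ vf d (cm σ i : ℕ) (TF σ i) := by
  have hn : 0 < n := i.pos
  unfold ffF qF
  rw [mod_smul' hn _ _ (cm σ i).isLt, div_smul hn _ _ (cm σ i).isLt, T_mod_eq]

lemma ff_at_q (uf : Fin n → α) (hσ : ∀ i, vf i = uf (σ i)) (i : Fin n) :
    ffF σ vf d (qF σ i) = uf i := by
  rw [ff_q]
  rcases Nat.eq_zero_or_pos (rk σ i) with h0 | hpos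
  · have hicm : i = cm σ i := eq_cm_of_rk_zero σ h0
    obtain ⟨jm, hc, hmaxr, hs⟩ := exists_maxrank σ i
    have heval := gg_eval_fallback σ vf d (cm σ i : ℕ) (TF σ i) jm (by rw [hc])
      (fun j hj hlt => by
        have hcmj : cm σ j = cm σ i := Fin.ext hj
        have := rk_lt_of_T_lt σ hcmj hlt
        omega)
      (fun j hj => T_le_of_rk_le σ (by rw [Fin.ext hj, hc]) (hmaxr j (Fin.ext hj)))
    rw [heval, hσ jm, hs, ← hicm]
  · have hicm : i ≠ cm σ i := by
      intro h
      rw [rk_zero_of_eq_cm σ h] at hpos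
      omega
    have hsj0 : σ (σ.symm i) = i := σ.apply_symm_apply i
    have hcmj0 : cm σ (σ.symm i) = cm σ i := by
      have h5 := cm_sigma σ (σ.symm i)
      rw [hsj0] at h5
      exact h5.symm
    have hrk : rk σ i = rk σ (σ.symm i) + 1 := by
      have h2 : σ (σ.symm i) ≠ cm σ (σ.symm i) := by rw [hsj0, hcmj0]; exact hicm
      have h3 := rk_sigma σ h2
      rw [hsj0] at h3
      omega
    have heval := gg_eval_max σ vf d (cm σ i : ℕ) (TF σ i) (σ.symm i)
      (by rw [hcmj0])
      (T_mono σ (by omega))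
      (fun j hj hlt => by
        have hcmj : cm σ j = cm σ i := Fin.ext hj
        have h4 := rk_lt_of_T_lt σ hcmj hlt
        exact T_le_of_rk_le σ (by rw [hcmj, hcmj0]) (by omega))
    rw [heval, hσ (σ.symm i), hsj0]

lemma ff_at_qk (i : Fin n) :
    ffF σ vf d ((qF σ i + n * kpc n) % (n * N2c n)) = vf i := by
  have hn : 0 < n := i.pos
  obtain ⟨hm, hd⟩ := step_pos (n := n) hn (qF σ i)
  unfold ffF
  rw [hm, hd, step_time hn]
  have hqm : qF σ i % n = (cm σ i : ℕ) := by
    unfold qF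
    rw [mod_smul' hn _ _ (cm σ i).isLt]
  have hqd : qF σ i / n = xxF σ i := by
    unfold qF
    rw [div_smul hn _ _ (cm σ i).isLt]
  rw [hqm, hqd, T_mod_eq]
  have hTlt := T_lt σ i
  rw [Nat.mod_eq_of_lt (by omega)]
  exact gg_eval_max σ vf d _ _ i rfl (by omega)
    (fun j hj hlt => by
      have hcmj : cm σ j = cm σ i := Fin.ext hj
      rcases Nat.lt_or_ge (TF σ j) (TF σ i) with h' | h'
      · omega
      · have : TF σ j = TF σ i := by omega
        rw [this])

lemma ff_step (hn : 0 < n) (p : ℕ) (hp : p < n * N2c n) (hun : ∀ i : Fin n, p ≠ qF σ i) :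
    ffF σ vf d ((p + n * kpc n) % (n * N2c n)) = ffF σ vf d p := by
  obtain ⟨hm, hd⟩ := step_pos (n := n) hn p
  unfold ffF
  rw [hm, hd, step_time hn]
  set c := p % n with hc
  set t := (Rc n + 1) * (p / n) % N2c n with ht
  have htlt : t < N2c n := Nat.mod_lt _ (N2_pos hn)
  have hnoT : ∀ j : Fin n, (cm σ j : ℕ) = c → TF σ j ≠ t := by
    intro j hj hTj
    apply hun j
    have hxxj := xx_lt σ j
    have hplt : p / n < N2c n := by
      exact Nat.div_lt_of_lt_mul hp
    have hteq : (Rc n + 1) * (xxF σ j) % N2c n = (Rc n + 1) * (p / n) % N2c n := by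
      rw [T_mod_eq, hTj, ht]
    have hxe : xxF σ j = p / n := time_inj hn hxxj hplt hteq
    have : p = n * (p / n) + p % n := (Nat.div_add_mod p n).symm
    rw [this, ← hxe, ← hc, ← hj]
    rfl
  rcases Nat.lt_or_ge (t+1) (N2c n) with hns | hw
  · rw [Nat.mod_eq_of_lt hns]
    have hset : (TcF σ c).filter (· < t+1) = (TcF σ c).filter (· < t) := by
      apply Finset.filter_congr
      intro m hmm
      obtain ⟨j, hj1, hj2⟩ := (mem_Tc σ).mp hmm
      have := hnoT j hj1
      constructor <;> intro <;> omega
    unfold ggF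
    rw [hset]
  · have ht1 : t + 1 = N2c n := by omega
    rw [ht1, Nat.mod_self]
    have hf0 : (TcF σ c).filter (· < 0) = ∅ := by
      ext m
      simp
    have hft : (TcF σ c).filter (· < t) = TcF σ c := by
      apply Finset.filter_true_of_mem
      intro m hmm
      obtain ⟨j, hj1, hj2⟩ := (mem_Tc σ).mp hmm
      have := T_lt σ j
      omega
    unfold ggF
    rw [hf0, hft]
    by_cases hne : (TcF σ c).Nonempty
    · rw [dif_neg Finset.not_nonempty_empty, dif_pos hne, dif_pos hne]
    · rw [dif_neg Finset.not_nonempty_empty, dif_neg hne, dif_neg hne]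

end GG
end Stmt8
namespace Stmt8
variable {α : Type*} {n : ℕ}

lemma main_witness (hn : 0 < n) (σ : Equiv.Perm (Fin n)) (uf vf : Fin n → α)
    (hσ : ∀ i, vf i = uf (σ i)) :
    ∃ (N k : ℕ) (q : Fin n → ℕ) (f : ℕ → α),
      0 < N ∧
      (∀ i j : Fin n, (i:ℕ) < (j:ℕ) → q i < q j) ∧
      (∀ i, q i < N) ∧
      (∀ i, f (q i) = uf i) ∧
      (∀ i, f ((q i + k) % N) = vf i) ∧
      (∀ p, p < N → (∀ i, p ≠ q i) → f ((p + k) % N) = f p) := by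
  refine ⟨n * N2c n, n * kpc n, qF σ, ffF σ vf (uf ⟨0, hn⟩),
    Nat.mul_pos hn (N2_pos hn), fun i j h => q_mono σ h, fun i => q_lt_N σ i,
    fun i => ff_at_q σ vf _ uf hσ i, fun i => ff_at_qk σ vf _ i,
    fun p hp hup => ff_step σ vf _ hn p hp hup⟩

end Stmt8

theorem stmt_8' {α : Type*} [DecidableEq α] (u v : List α) (hlen : u.length = v.length) :
    (∃ ss : List (List α), ss.length = u.length + 1 ∧
      (interleave ss u).IsRotated (interleave ss v)) ↔ ∀ a : α, u.count a = v.count a := by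
  constructor
  · rintro ⟨ss, hss, hrot⟩ a
    have hc := hrot.perm.count_eq a
    rw [Stmt8.count_interleave ss u hss a,
      Stmt8.count_interleave ss v (by rw [hss, hlen]) a] at hc
    omega
  · intro hcnt
    have hperm : u.Perm v := List.perm_iff_count.mpr hcnt
    rcases Nat.eq_zero_or_pos u.length with hn0 | hn
    · have hu : u = [] := List.length_eq_zero_iff.mp hn0
      have hv : v = [] := List.length_eq_zero_iff.mp (by omega)
      subst hu; subst hv
      exact ⟨[[]], by simp, by simp [interleave]⟩
    · obtain ⟨σc, hσc⟩ := Stmt8.perm_exists_equiv hperm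
      obtain ⟨N, k, q, f, hNpos, hmono, hqlt, hfq, hfqk, hstep⟩ :=
        Stmt8.main_witness hn ((finCongr hlen).trans σc) u.get
          (fun i => v.get (finCongr hlen i)) (fun i => hσc (finCongr hlen i))
      set W1 : List α := (List.range N).map f with hW1
      set W2 : List α := W1.rotate k with hW2
      have hW1len : W1.length = N := by simp [hW1]
      have hW2len : W2.length = N := by simp [hW2, hW1]
      have hW1get : ∀ p, p < N → W1[p]? = some (f p) := by
        intro p hp
        rw [hW1, List.getElem?_map, List.getElem?_range hp]
        rfl
      have hW2get : ∀ p, p < N → W2[p]? = some (f ((p + k) % N)) := by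
        intro p hp
        rw [hW2, List.getElem?_rotate (by rw [hW1len]; exact hp), hW1len]
        exact hW1get _ (Nat.mod_lt _ hNpos)
      obtain ⟨ss, hsslen, hss1, hss2⟩ :=
        Stmt8.exists_interleave u v (fun m => if h : m < u.length then q ⟨m, h⟩ else 0) W1 W2
          hlen (by omega)
          (fun i j hij hj => by
            show (if h : i < u.length then q ⟨i, h⟩ else 0)
              < (if h : j < u.length then q ⟨j, h⟩ else 0)
            rw [dif_pos (by omega : i < u.length), dif_pos (by omega : j < u.length)]
            exact hmono _ _ hij)
          (fun i hi => by
            show W1[if h : i < u.length then q ⟨i, h⟩ else 0]? = u[i]?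
            rw [dif_pos (by omega : i < u.length)]
            rw [hW1get _ (hqlt ⟨i, hi⟩), hfq ⟨i, hi⟩]
            exact (List.getElem?_eq_getElem hi).symm)
          (fun i hi => by
            show W2[if h : i < u.length then q ⟨i, h⟩ else 0]? = v[i]?
            rw [dif_pos (by omega : i < u.length)]
            rw [hW2get _ (hqlt ⟨i, hi⟩), hfqk ⟨i, hi⟩]
            have hiv : i < v.length := by omega
            rw [List.getElem?_eq_getElem hiv]
            rfl)
          (fun p hp => by
            rcases Nat.lt_or_ge p N with hpN | hpN
            · rw [hW2get _ hpN, hW1get _ hpN]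
              congr 1
              exact Eq.symm <| hstep p hpN (fun i => by
                have h9 : p ≠ if h : (i:ℕ) < u.length then q ⟨(i:ℕ), h⟩ else 0 :=
                  hp (i : ℕ) (by omega)
                rw [dif_pos i.isLt] at h9
                simpa using h9)

            · rw [List.getElem?_eq_none_iff.mpr (by omega), List.getElem?_eq_none_iff.mpr (by omega)])
      exact ⟨ss, hsslen, by rw [hss1, hss2]; exact ⟨k, rfl⟩⟩


/-- Main theorem: two words of equal length are cyclically equalizable iff
they have the same Parikh vector. -/
theorem stmt_8 {α : Type*} [DecidableEq α] (u v : List α) (hlen : u.length = v.length) :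
    CyclicallyEqualizable u v ↔ ∀ a : α, u.count a = v.count a :=
  stmt_8' u v hlen
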